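/- Define u : 𝔻 → ℝ on the open unit disc by u(re^{iφ}) := −∑_{n=1}^{∞} n rⁿ sin(nφ), equivalently u(z) = −Im(z/(1−z)²). Then u is harmonic on 𝔻, for every φ ∈ [0,2π) one has lim_{r→1-} u(re^{iφ}) = 0, and u is not identically zero; moreover M_r(u) = O((1-r)^{-2}) as r → 1-. (This shows the growth condition in Dahlberg's radial uniqueness theorem is sharp.) -/

import Mathlib

open Set Filter Metric MeasureTheory

noncomputable section

/-- A real-valued function `u` is harmonic on `D ⊆ ℂ` if it is twice continuously
differentiable on `D` and satisfies Laplace's equation `Δu = 0` there. -/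
def IsHarmonicOn (u : ℂ → ℝ) (D : Set ℂ) : Prop :=
  ContDiffOn ℝ 2 u D ∧
    ∀ z ∈ D,
      fderiv ℝ (fun w => fderiv ℝ u w 1) z 1 +
        fderiv ℝ (fun w => fderiv ℝ u w Complex.I) z Complex.I = 0

/-- The function `u(re^{iφ}) = -∑_{n≥1} n rⁿ sin(nφ)`, in closed form `-Im(z/(1-z)²)`. -/
def dahlbergExample (z : ℂ) : ℝ := -(z / (1 - z) ^ 2).im

/-! ### Auxiliary lemmas -/

private def df : ℂ → ℂ := fun z => z / (1 - z) ^ 2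

private lemma one_sub_ne {z : ℂ} (hz : z ∈ ball (0:ℂ) 1) : (1 : ℂ) - z ≠ 0 := by
  rw [mem_ball_zero_iff] at hz
  intro h
  rw [sub_eq_zero] at h
  rw [← h] at hz
  simp at hz

private lemma df_diff : DifferentiableOn ℂ df (ball (0:ℂ) 1) := by
  intro z hz
  exact (differentiableAt_id.div
    (((differentiableAt_const (1:ℂ)).sub differentiableAt_id).pow 2)
    (pow_ne_zero 2 (one_sub_ne hz))).differentiableWithinAt

private lemma fderiv_neg_im {f : ℂ → ℂ} {c w : ℂ} (hf : HasDerivAt f c w) (v : ℂ) :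
    fderiv ℝ (fun x => -(f x).im) w v = -(c * v).im := by
  have h : HasFDerivAt (fun x => -(f x).im)
      (-(Complex.imCLM.comp
        ((ContinuousLinearMap.smulRight (1 : ℂ →L[ℂ] ℂ) c).restrictScalars ℝ))) w :=
    (Complex.imCLM.hasFDerivAt.comp w (hf.hasFDerivAt.restrictScalars ℝ)).neg
  rw [h.fderiv]
  simp [mul_comm]

private lemma fderiv_neg_re {f : ℂ → ℂ} {c w : ℂ} (hf : HasDerivAt f c w) (v : ℂ) :
    fderiv ℝ (fun x => -(f x).re) w v = -(c * v).re := by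
  have h : HasFDerivAt (fun x => -(f x).re)
      (-(Complex.reCLM.comp
        ((ContinuousLinearMap.smulRight (1 : ℂ →L[ℂ] ℂ) c).restrictScalars ℝ))) w :=
    (Complex.reCLM.hasFDerivAt.comp w (hf.hasFDerivAt.restrictScalars ℝ)).neg
  rw [h.fderiv]
  simp [mul_comm]

private lemma harmonic_part : IsHarmonicOn dahlbergExample (ball (0:ℂ) 1) := by
  have hdfeq : dahlbergExample = fun z => -(df z).im := rfl
  have df_an : AnalyticOnNhd ℂ df (ball (0:ℂ) 1) := df_diff.analyticOnNhd isOpen_ball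
  constructor
  · have hc : ContDiffOn ℂ 2 df (ball (0:ℂ) 1) :=
      ContDiffOn.div contDiffOn_id ((contDiffOn_const.sub contDiffOn_id).pow 2)
        (fun z hz => pow_ne_zero 2 (one_sub_ne hz))
    have hr : ContDiffOn ℝ 2 df (ball (0:ℂ) 1) := hc.restrict_scalars ℝ
    rw [hdfeq]
    exact (Complex.imCLM.contDiff.comp_contDiffOn hr).neg
  · intro z hz
    have hmem : ball (0:ℂ) 1 ∈ nhds z := isOpen_ball.mem_nhds hz
    have hdf : ∀ w ∈ ball (0:ℂ) 1, HasDerivAt df (deriv df w) w := fun w hw =>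
      ((df_diff w hw).differentiableAt (isOpen_ball.mem_nhds hw)).hasDerivAt
    have hg : HasDerivAt (deriv df) (deriv (deriv df) z) z :=
      (((df_an.deriv z hz)).differentiableAt).hasDerivAt
    have e1 : (fun w => fderiv ℝ dahlbergExample w 1) =ᶠ[nhds z]
        (fun w => -(deriv df w).im) :=
      eventually_of_mem hmem (fun w hw => by
        rw [hdfeq]
        simpa using fderiv_neg_im (hdf w hw) 1)
    have e2 : (fun w => fderiv ℝ dahlbergExample w Complex.I) =ᶠ[nhds z]
        (fun w => -(deriv df w).re) :=
      eventually_of_mem hmem (fun w hw => by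
        rw [hdfeq]
        simpa [Complex.mul_I_im] using fderiv_neg_im (hdf w hw) Complex.I)
    have t1 : fderiv ℝ (fun w => fderiv ℝ dahlbergExample w 1) z 1
        = -(deriv (deriv df) z).im := by
      rw [Filter.EventuallyEq.fderiv_eq e1]
      simpa using fderiv_neg_im hg 1
    have t2 : fderiv ℝ (fun w => fderiv ℝ dahlbergExample w Complex.I) z Complex.I
        = (deriv (deriv df) z).im := by
      rw [Filter.EventuallyEq.fderiv_eq e2]
      simpa [Complex.mul_I_re] using fderiv_neg_re hg Complex.I
    rw [t1, t2]
    ring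

private lemma limit_part : ∀ φ ∈ Ico (0:ℝ) (2 * Real.pi),
    Tendsto (fun r : ℝ => dahlbergExample ((r : ℂ) * Complex.exp ((φ : ℂ) * Complex.I)))
      (nhdsWithin 1 (Iio 1)) (nhds 0) := by
  intro φ hφ
  rcases eq_or_ne φ 0 with h0 | h0
  · subst h0
    have heq : (fun r : ℝ => dahlbergExample ((r : ℂ) * Complex.exp (((0:ℝ) : ℂ) * Complex.I)))
        = fun _ => 0 := by
      funext r
      simp only [Complex.ofReal_zero, zero_mul, Complex.exp_zero, mul_one, dahlbergExample]
      rw [show ((1:ℂ) - (r:ℂ)) ^ 2 = ((((1:ℝ) - r) ^ 2 : ℝ) : ℂ) by push_cast; ring,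
        ← Complex.ofReal_div, Complex.ofReal_im, neg_zero]
    rw [heq]
    exact tendsto_const_nhds
  · set w : ℂ := Complex.exp ((φ : ℂ) * Complex.I) with hw
    have hφpos : 0 < φ := lt_of_le_of_ne hφ.1 (Ne.symm h0)
    have hw0 : w ≠ 0 := Complex.exp_ne_zero _
    have hw1 : w ≠ 1 := by
      intro h
      rw [hw] at h
      obtain ⟨n, hn⟩ := Complex.exp_eq_one_iff.mp h
      have hI : ((φ : ℂ)) = n * (2 * Real.pi) :=
        mul_right_cancel₀ Complex.I_ne_zero (by rw [hn]; ring)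
      have hre : φ = n * (2 * Real.pi) := by exact_mod_cast hI
      have hπ := Real.pi_pos
      have hn0 : 0 < (n:ℝ) := by nlinarith
      have hn1 : (1:ℝ) ≤ n := by exact_mod_cast hn0
      nlinarith [hφ.2]
    have hconj : (starRingEnd ℂ) w = w⁻¹ := by
      rw [hw, ← Complex.exp_conj, ← Complex.exp_neg]
      congr 1
      simp [Complex.conj_I]
      try ring
    have hwinv : (1:ℂ) - w⁻¹ ≠ 0 := by
      rw [sub_ne_zero]
      intro h
      exact hw1 (by rw [← inv_inv w, ← h, inv_one])
    have key : (w / (1 - w) ^ 2).im = 0 := by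
      have hself : (starRingEnd ℂ) (w / (1 - w) ^ 2) = w / (1 - w) ^ 2 := by
        rw [map_div₀, map_pow, map_sub, map_one, hconj]
        rw [div_eq_div_iff (pow_ne_zero _ hwinv)
          (pow_ne_zero _ (sub_ne_zero.mpr (Ne.symm hw1)))]
        field_simp
        ring
      exact Complex.conj_eq_iff_im.mp hself
    have hcont : ContinuousAt (fun r : ℝ => dahlbergExample ((r : ℂ) * w)) 1 := by
      apply ContinuousAt.neg
      apply Complex.continuous_im.continuousAt.comp
      apply ContinuousAt.div
      · exact (Complex.continuous_ofReal.continuousAt).mul continuousAt_const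
      · exact (continuousAt_const.sub
          ((Complex.continuous_ofReal.continuousAt).mul continuousAt_const)).pow 2
      · simpa using pow_ne_zero 2 (sub_ne_zero.mpr (Ne.symm hw1))
    have h2 := hcont.tendsto.mono_left
      (nhdsWithin_le_nhds : nhdsWithin (1:ℝ) (Iio 1) ≤ nhds 1)
    simp only [Complex.ofReal_one, one_mul, dahlbergExample, key, neg_zero] at h2
    exact h2

private lemma nonzero_part : ∃ z ∈ ball (0:ℂ) 1, dahlbergExample z ≠ 0 := by
  refine ⟨Complex.I / 2, ?_, ?_⟩
  · rw [mem_ball_zero_iff]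
    simp [norm_div]
    norm_num
  · simp only [dahlbergExample]
    norm_num [Complex.ext_iff, Complex.div_im, Complex.div_re, Complex.normSq_apply,
      pow_two, Complex.mul_re, Complex.mul_im, Complex.sub_re, Complex.sub_im]

private lemma growth_part : ∃ C : ℝ, ∀ᶠ r : ℝ in nhdsWithin 1 (Iio 1),
    ∀ φ : ℝ, |dahlbergExample ((r : ℂ) * Complex.exp ((φ : ℂ) * Complex.I))| ≤
      C * ((1 - r) ^ 2)⁻¹ := by
  refine ⟨1, ?_⟩
  filter_upwards [Ioo_mem_nhdsLT_of_mem (show (1:ℝ) ∈ Ioc 0 1 by norm_num)] with r hr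
  intro φ
  set w : ℂ := Complex.exp ((φ : ℂ) * Complex.I) with hw
  have hwabs : ‖w‖ = 1 := Complex.norm_exp_ofReal_mul_I φ
  have hr0 : 0 < r := hr.1
  have hr1 : r < 1 := hr.2
  have habs : ‖(r:ℂ) * w‖ = r := by
    simp [norm_mul, hwabs, abs_of_pos hr0]
  have hden : 1 - r ≤ ‖1 - (r:ℂ) * w‖ := by
    have := norm_sub_norm_le (1:ℂ) ((r:ℂ) * w)
    rw [habs, norm_one] at this
    exact this
  have hdenpos : (0:ℝ) < 1 - r := by linarith
  have h1 : |dahlbergExample ((r:ℂ) * w)| ≤ r / (1 - r) ^ 2 := by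
    rw [dahlbergExample, abs_neg]
    refine (Complex.abs_im_le_norm _).trans ?_
    rw [norm_div, norm_pow, habs]
    apply div_le_div_of_nonneg_left hr0.le (by positivity)
    exact pow_le_pow_left₀ hdenpos.le hden 2
  calc |dahlbergExample ((r:ℂ) * w)| ≤ r / (1 - r) ^ 2 := h1
    _ ≤ 1 * ((1 - r) ^ 2)⁻¹ := by
        rw [div_eq_mul_inv]
        apply mul_le_mul_of_nonneg_right hr1.le (by positivity)

/-- The function `u(z) = -Im(z/(1-z)²)` is harmonic on the unit disc, has radial boundary
limit `0` everywhere, is not identically zero, and satisfies `M_r(u) = O((1-r)⁻²)`.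
This shows the growth condition in Dahlberg's radial uniqueness theorem is sharp. -/
theorem dahlberg_sharp :
    IsHarmonicOn dahlbergExample (ball (0:ℂ) 1) ∧
    (∀ φ ∈ Ico (0:ℝ) (2 * Real.pi),
      Tendsto (fun r : ℝ => dahlbergExample ((r : ℂ) * Complex.exp ((φ : ℂ) * Complex.I)))
        (nhdsWithin 1 (Iio 1)) (nhds 0)) ∧
    (∃ z ∈ ball (0:ℂ) 1, dahlbergExample z ≠ 0) ∧
    (∃ C : ℝ, ∀ᶠ r : ℝ in nhdsWithin 1 (Iio 1),
      ∀ φ : ℝ, |dahlbergExample ((r : ℂ) * Complex.exp ((φ : ℂ) * Complex.I))| ≤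
        C * ((1 - r) ^ 2)⁻¹) :=
  ⟨harmonic_part, limit_part, nonzero_part, growth_part⟩
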